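/- Let k ≥ 1 be an integer. Every finite simple graph G with n vertices containing no clique of cardinality k + 1 has at most (n/k + 1)^k cliques; that is, c(G) ≤ (n/k + 1)^k as real numbers, equivalently k^k·c(G) ≤ (n + k)^k. -/

import Mathlib

/-- The number of cliques (sets of pairwise adjacent vertices, including the
empty clique) of a graph. -/
noncomputable def cliqueCount {V : Type*} (G : SimpleGraph V) : ℕ :=
  Nat.card {s : Finset V // G.IsClique (s : Set V)}

open Finset
open scoped Classical

namespace CliqueCountAux

/-- The clique count of the balanced complete `k`-partite (Turán) graph on `n`
vertices: the product of `(part size + 1)` over the `k` balanced parts. -/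
def tur (k n : ℕ) : ℕ := ∏ i ∈ Finset.range k, ((n + i) / k + 1)

lemma tur_zero (k : ℕ) : tur k 0 = 1 := by
  refine Finset.prod_eq_one fun i hi => ?_
  rw [Finset.mem_range] at hi
  rw [Nat.zero_add, Nat.div_eq_of_lt hi]
  omega

lemma tur_mono (k : ℕ) {a b : ℕ} (h : a ≤ b) : tur k a ≤ tur k b :=
  Finset.prod_le_prod' fun i _ => by
    have := Nat.div_le_div_right (c := k) (Nat.add_le_add_right h i)
    omega

lemma tur_formula (k q r : ℕ) (hr : r ≤ k) :
    tur k (q * k + r) = (q + 2) ^ r * (q + 1) ^ (k - r) := by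
  rcases Nat.eq_zero_or_pos k with hk | hk
  · subst hk
    interval_cases r
    simp [tur]
  · have h := Finset.prod_range_add (fun i => ((q * k + r + i) / k + 1)) (k - r) r
    rw [Nat.sub_add_cancel hr] at h
    unfold tur
    rw [h]
    have h1 : ∀ i ∈ Finset.range (k - r), (q * k + r + i) / k + 1 = q + 1 := by
      intro i hi
      rw [Finset.mem_range] at hi
      have e : q * k + r + i = (r + i) + q * k := by ring
      rw [e, Nat.add_mul_div_right _ _ hk, Nat.div_eq_of_lt (by omega)]
      omega
    have h2 : ∀ i ∈ Finset.range r, (q * k + r + (k - r + i)) / k + 1 = q + 2 := by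
      intro i hi
      rw [Finset.mem_range] at hi
      have e : q * k + r + (k - r + i) = i + (q + 1) * k := by
        have h' : r + (k - r) = k := by omega
        calc q * k + r + (k - r + i) = q * k + (r + (k - r)) + i := by ring
          _ = q * k + k + i := by rw [h']
          _ = i + (q + 1) * k := by ring
      rw [e, Nat.add_mul_div_right _ _ hk, Nat.div_eq_of_lt (by omega)]
      omega
    rw [Finset.prod_congr rfl h1, Finset.prod_congr rfl h2,
      Finset.prod_const, Finset.prod_const, Finset.card_range, Finset.card_range]
    ring

lemma tur_rec (k n : ℕ) (hk : 1 ≤ k) (hn : 1 ≤ n) :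
    tur k (n - 1) + tur (k - 1) (n - 1 - (n - 1) / k) = tur k n := by
  set q := (n - 1) / k with hq
  set r := (n - 1) % k with hr'
  have hqr : q * k + r = n - 1 := by
    rw [hq, hr', Nat.mul_comm]
    exact Nat.div_add_mod _ _
  have hrk : r < k := Nat.mod_lt _ hk
  have hmul : q * (k - 1) + q = q * k := by
    cases k with
    | zero => omega
    | succ k' => simp [Nat.mul_succ]
  have e3 : n - 1 - (n - 1) / k = q * (k - 1) + r := by omega
  have e1 : n - 1 = q * k + r := hqr.symm
  have e2 : n = q * k + (r + 1) := by omega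
  rw [e3, e1, e2, tur_formula k q r hrk.le, tur_formula (k - 1) q r (by omega),
    tur_formula k q (r + 1) (by omega)]
  have h4 : k - r = (k - 1 - r) + 1 := by omega
  have h5 : k - (r + 1) = k - 1 - r := by omega
  rw [h4, h5, pow_succ, pow_succ]
  ring

lemma tur_le (k n : ℕ) (hk : 1 ≤ k) : k ^ k * tur k n ≤ (n + k) ^ k := by
  set q := n / k with hq
  set r := n % k with hr'
  have hqr : q * k + r = n := by
    rw [hq, hr', Nat.mul_comm]; exact Nat.div_add_mod _ _
  have hrk : r < k := Nat.mod_lt _ hk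
  rw [show n = q * k + r from hqr.symm, tur_formula k q r hrk.le]
  have hkpos : (0:ℝ) < (k:ℝ) := by exact_mod_cast hk
  have ha : (0:ℝ) ≤ (q:ℝ) + 2 := by positivity
  have hb : (0:ℝ) ≤ (q:ℝ) + 1 := by positivity
  have hw : (r:ℝ)/(k:ℝ) + ((k - r : ℕ):ℝ)/(k:ℝ) = 1 := by
    rw [← add_div, Nat.cast_sub hrk.le]
    field_simp
    ring
  have h2 := Real.geom_mean_le_arith_mean2_weighted
    (by positivity) (by positivity) ha hb hw
  have h3 := pow_le_pow_left₀ (by positivity) h2 k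
  have l1 : ((((q:ℝ) + 2) ^ ((r:ℝ)/(k:ℝ)) * (((q:ℝ) + 1) ^ (((k - r : ℕ):ℝ)/(k:ℝ)))) ^ k)
      = ((q:ℝ) + 2) ^ (r:ℕ) * ((q:ℝ) + 1) ^ ((k - r : ℕ)) := by
    rw [mul_pow, ← Real.rpow_natCast (((q:ℝ) + 2) ^ ((r:ℝ)/(k:ℝ))) k,
      ← Real.rpow_natCast (((q:ℝ) + 1) ^ (((k - r : ℕ):ℝ)/(k:ℝ))) k,
      ← Real.rpow_mul ha, ← Real.rpow_mul hb,
      div_mul_cancel₀ _ hkpos.ne', div_mul_cancel₀ _ hkpos.ne',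
      Real.rpow_natCast, Real.rpow_natCast]
  have l2 : (r:ℝ)/(k:ℝ) * ((q:ℝ) + 2) + ((k - r : ℕ):ℝ)/(k:ℝ) * ((q:ℝ) + 1)
      = ((q:ℝ) * k + r + k) / k := by
    rw [Nat.cast_sub hrk.le]
    field_simp
    ring
  rw [l1, l2] at h3
  have h4 : (k:ℝ) ^ k * (((q:ℝ) + 2) ^ r * ((q:ℝ) + 1) ^ (k - r))
      ≤ ((q:ℝ) * k + r + k) ^ k := by
    have hm := mul_le_mul_of_nonneg_left h3 (le_of_lt (by positivity : (0:ℝ) < (k:ℝ) ^ k))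
    calc (k:ℝ) ^ k * (((q:ℝ) + 2) ^ r * ((q:ℝ) + 1) ^ (k - r))
        ≤ (k:ℝ) ^ k * ((((q:ℝ) * k + r + k) / k) ^ k) := hm
      _ = ((q:ℝ) * k + r + k) ^ k := by
          rw [div_pow, mul_div_cancel₀]
          positivity
  rw [← Nat.cast_le (α := ℝ)]
  push_cast
  convert h4 using 2 <;> (push_cast; try ring)

variable {V : Type*}

/-- The number of cliques of `G` contained in `s`. -/
noncomputable def ccount (G : SimpleGraph V) (s : Finset V) : ℕ :=
  (s.powerset.filter fun t : Finset V => G.IsClique (t : Set V)).card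

lemma ccount_empty (G : SimpleGraph V) : ccount G ∅ = 1 := by
  simp [ccount, Finset.powerset_empty, Finset.filter_singleton]

lemma ccount_split (G : SimpleGraph V) (s : Finset V) (v : V) (hv : v ∈ s) :
    ccount G s = ccount G (s.erase v) + ccount G (s.filter (G.Adj v)) := by
  have key := Finset.card_filter_add_card_filter_not
    (s := s.powerset.filter fun t : Finset V => G.IsClique (t : Set V))
    (p := fun t : Finset V => v ∈ t)
  have h1 : ((s.powerset.filter fun t : Finset V => G.IsClique (t : Set V)).filter
        fun t : Finset V => ¬ v ∈ t)
      = ((s.erase v).powerset.filter fun t : Finset V => G.IsClique (t : Set V)) := by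
    ext t
    simp only [Finset.mem_filter, Finset.mem_powerset, Finset.subset_erase]
    tauto
  have h2 : ((s.powerset.filter fun t : Finset V => G.IsClique (t : Set V)).filter
        fun t : Finset V => v ∈ t).card
      = (((s.filter (G.Adj v)).powerset).filter
        fun t : Finset V => G.IsClique (t : Set V)).card := by
    refine Finset.card_bij (fun t _ => t.erase v) ?_ ?_ ?_
    · intro t ht
      simp only [Finset.mem_filter, Finset.mem_powerset] at ht ⊢
      obtain ⟨⟨hts, htc⟩, hvt⟩ := ht
      refine ⟨?_, htc.subset (Finset.coe_subset.mpr (Finset.erase_subset _ _))⟩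
      intro u hu
      rw [Finset.mem_erase] at hu
      rw [Finset.mem_filter]
      exact ⟨hts hu.2, htc hvt (hu.2) (fun h => hu.1 h.symm)⟩
    · intro a ha b hb heq
      simp only [Finset.mem_filter, Finset.mem_powerset] at ha hb
      rw [← Finset.insert_erase ha.2, ← Finset.insert_erase hb.2]
      rw [heq]
    · intro b hb
      simp only [Finset.mem_filter, Finset.mem_powerset] at hb
      obtain ⟨hbs, hbc⟩ := hb
      have hvb : v ∉ b := fun hvb => G.irrefl (Finset.mem_filter.mp (hbs hvb)).2
      refine ⟨insert v b, ?_, Finset.erase_insert hvb⟩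
      simp only [Finset.mem_filter, Finset.mem_powerset]
      refine ⟨⟨?_, ?_⟩, Finset.mem_insert_self _ _⟩
      · exact Finset.insert_subset hv (fun u hu => (Finset.mem_filter.mp (hbs hu)).1)
      · rw [Finset.coe_insert]
        exact hbc.insert fun u hu _ => (Finset.mem_filter.mp (hbs hu)).2
  rw [h1] at key
  unfold ccount
  omega

lemma exists_big_clique (G : SimpleGraph V) (s : Finset V) (M k : ℕ)
    (h : ∀ v ∈ s, (s.filter fun u => ¬ G.Adj v u).card ≤ M)
    (hs : k * M < s.card) :
    ∃ t, t ⊆ s ∧ G.IsClique (t : Set V) ∧ t.card = k + 1 := by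
  suffices H : ∀ j, j ≤ k + 1 → ∃ t, t ⊆ s ∧ G.IsClique (t : Set V) ∧ t.card = j from
    H (k + 1) le_rfl
  intro j
  induction j with
  | zero => exact fun _ => ⟨∅, by simp, by simp, rfl⟩
  | succ j ihj =>
    intro hj
    obtain ⟨t, hts, htc, htcard⟩ := ihj (by omega)
    set c := s.filter (fun u => ∀ x ∈ t, G.Adj x u) with hc
    have hcs : c ⊆ s := Finset.filter_subset _ _
    have hsub : s \ c ⊆ t.biUnion (fun x => s.filter fun u => ¬ G.Adj x u) := by
      intro u hu
      rw [Finset.mem_sdiff] at hu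
      obtain ⟨hus, huc⟩ := hu
      rw [hc, Finset.mem_filter] at huc
      push_neg at huc
      obtain ⟨x, hxt, hxu⟩ := huc hus
      exact Finset.mem_biUnion.mpr ⟨x, hxt, Finset.mem_filter.mpr ⟨hus, hxu⟩⟩
    have h1 : (s \ c).card ≤ j * M := by
      calc (s \ c).card ≤ (t.biUnion fun x => s.filter fun u => ¬ G.Adj x u).card :=
            Finset.card_le_card hsub
        _ ≤ ∑ x ∈ t, (s.filter fun u => ¬ G.Adj x u).card := Finset.card_biUnion_le
        _ ≤ t.card * M := by
            rw [← smul_eq_mul]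
            exact Finset.sum_le_card_nsmul _ _ _ fun x hx => h x (hts hx)
        _ = j * M := by rw [htcard]
    have hcard : (s \ c).card + c.card = s.card := Finset.card_sdiff_add_card_eq_card hcs
    have hjk : j * M ≤ k * M := Nat.mul_le_mul_right M (by omega)
    have h2 : c.Nonempty := Finset.card_pos.mp (by omega)
    obtain ⟨u, hu⟩ := h2
    rw [hc, Finset.mem_filter] at hu
    obtain ⟨hus, hadj⟩ := hu
    have hut : u ∉ t := fun hut => G.irrefl (hadj u hut)
    refine ⟨insert u t, Finset.insert_subset hus hts, ?_, ?_⟩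
    · rw [Finset.coe_insert]
      exact htc.insert fun b hb _ => (hadj b hb).symm
    · rw [Finset.card_insert_of_notMem hut, htcard]

lemma ccount_le (G : SimpleGraph V) :
    ∀ (n : ℕ) (s : Finset V), s.card = n → ∀ k : ℕ,
      (∀ t ⊆ s, G.IsClique (t : Set V) → t.card ≤ k) → ccount G s ≤ tur k n := by
  intro n
  induction n using Nat.strong_induction_on with
  | _ n ih =>
  intro s hs k hcl
  rcases Nat.eq_zero_or_pos n with h0 | hpos
  · subst h0
    rw [Finset.card_eq_zero.mp hs, ccount_empty, tur_zero]
  · have hsne : s.Nonempty := Finset.card_pos.mp (by omega)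
    rcases Nat.eq_zero_or_pos k with hk0 | hk
    · exfalso
      obtain ⟨v, hv⟩ := hsne
      have hone := hcl {v} (Finset.singleton_subset_iff.mpr hv)
        (by rw [Finset.coe_singleton]; exact G.isClique_singleton v)
      rw [Finset.card_singleton] at hone
      omega
    · by_cases hex : ∃ v ∈ s, (s.filter (G.Adj v)).card ≤ n - 1 - (n - 1) / k
      · obtain ⟨v, hv, hd⟩ := hex
        rw [ccount_split G s v hv]
        have hdiv : (n - 1) / k ≤ n - 1 := Nat.div_le_self _ _
        have h1 : ccount G (s.erase v) ≤ tur k (n - 1) := by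
          refine ih (n - 1) (by omega) _ ?_ k ?_
          · rw [Finset.card_erase_of_mem hv, hs]
          · exact fun t ht hc => hcl t (ht.trans (Finset.erase_subset _ _)) hc
        have hcard' : (s.filter (G.Adj v)).card < n :=
          lt_of_le_of_lt (hd.trans (Nat.sub_le _ _)) (Nat.sub_lt hpos Nat.one_pos)
        have h2 : ccount G (s.filter (G.Adj v)) ≤ tur (k - 1) (s.filter (G.Adj v)).card := by
          refine ih _ hcard' _ rfl (k - 1) ?_
          intro t ht htc
          have hvt : v ∉ t := fun hvt => G.irrefl (Finset.mem_filter.mp (ht hvt)).2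
          have hins : insert v t ⊆ s :=
            Finset.insert_subset hv (fun u hu => (Finset.mem_filter.mp (ht hu)).1)
          have hinsc : G.IsClique ((insert v t : Finset V) : Set V) := by
            rw [Finset.coe_insert]
            exact htc.insert fun u hu _ => (Finset.mem_filter.mp (ht hu)).2
          have hle := hcl _ hins hinsc
          rw [Finset.card_insert_of_notMem hvt] at hle
          omega
        have h2' : tur (k - 1) (s.filter (G.Adj v)).card ≤ tur (k - 1) (n - 1 - (n - 1) / k) :=
          tur_mono _ hd
        calc ccount G (s.erase v) + ccount G (s.filter (G.Adj v))
            ≤ tur k (n - 1) + tur (k - 1) (n - 1 - (n - 1) / k) :=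
              Nat.add_le_add h1 (h2.trans h2')
          _ = tur k n := tur_rec k n hk hpos
      · exfalso
        push_neg at hex
        have hM : ∀ v ∈ s, (s.filter fun u => ¬ G.Adj v u).card ≤ (n - 1) / k := by
          intro v hv
          have hsplit := Finset.card_filter_add_card_filter_not
            (s := s) (p := G.Adj v)
          have hgt := hex v hv
          have hdiv : (n - 1) / k ≤ n - 1 := Nat.div_le_self _ _
          omega
        have hmul : k * ((n - 1) / k) < s.card := by
          rw [hs]
          calc k * ((n - 1) / k) = (n - 1) / k * k := Nat.mul_comm _ _
            _ ≤ n - 1 := Nat.div_mul_le_self _ _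
            _ < n := by omega
        obtain ⟨t, hts, htc, htcard⟩ := exists_big_clique G s ((n - 1) / k) k hM hmul
        have := hcl t hts htc
        omega

end CliqueCountAux

/-- Every graph with `n` vertices and no clique of cardinality `k + 1`
(where `k ≥ 1`) has at most `(n/k + 1)^k` cliques. -/
theorem clique_count_clique_free {V : Type*} [Fintype V] (G : SimpleGraph V)
    (k : ℕ) (hk : 1 ≤ k) (hfree : G.CliqueFree (k + 1)) :
    k ^ k * cliqueCount G ≤ (Fintype.card V + k) ^ k := by
  have hre : cliqueCount G = CliqueCountAux.ccount G (Finset.univ : Finset V) := by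
    rw [cliqueCount, Nat.card_eq_fintype_card, CliqueCountAux.ccount, Finset.powerset_univ]
    exact Fintype.card_subtype (fun s : Finset V => G.IsClique (s : Set V))
  have hcl : ∀ t ⊆ (Finset.univ : Finset V), G.IsClique (t : Set V) → t.card ≤ k := by
    intro t _ htc
    by_contra h
    push_neg at h
    obtain ⟨u, hut, hcard⟩ := Finset.exists_subset_card_eq (show k + 1 ≤ t.card by omega)
    exact hfree u ⟨htc.subset (Finset.coe_subset.mpr hut), hcard⟩
  have h1 : CliqueCountAux.ccount G (Finset.univ : Finset V) ≤
      CliqueCountAux.tur k (Fintype.card V) :=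
    CliqueCountAux.ccount_le G (Fintype.card V) Finset.univ (Finset.card_univ) k hcl
  calc k ^ k * cliqueCount G = k ^ k * CliqueCountAux.ccount G Finset.univ := by rw [hre]
    _ ≤ k ^ k * CliqueCountAux.tur k (Fintype.card V) := Nat.mul_le_mul_left _ h1
    _ ≤ (Fintype.card V + k) ^ k := CliqueCountAux.tur_le k (Fintype.card V) hk
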